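/- arXiv:math/0009102 — 2 statements merged into one kernel-verified Lean document; each statement's English description precedes it below -/
import Mathlib

section
/- (First partial derivative of the entropy) Let n ≥ 1 and p = (p_1,…,p_n) with 0 < p_i < 1 for all i. Then for each l ∈ [n], the partial derivative of H(Z_p) with respect to p_l equals ∑_{k=0}^n (b(k, p_l̂) − b(k−1, p_l̂)) · log₂ b(k,p). -/
open Finset

/-- `b(k, S, p)`: the Poisson–binomial probability mass function built from the
parameters `p i`, `i ∈ S`, defined for all integers `k`. -/
noncomputable def pbinOn (n : ℕ) (S : Finset (Fin n)) (p : Fin n → ℝ) (k : ℤ) : ℝ :=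
  ∑ A ∈ S.powerset.filter (fun A : Finset (Fin n) => (A.card : ℤ) = k),
    (∏ i ∈ A, p i) * ∏ j ∈ S \ A, (1 - p j)

/-- Shannon entropy (base 2) of the Poisson–binomial distribution. -/
noncomputable def pbinEnt (n : ℕ) (p : Fin n → ℝ) : ℝ :=
  -∑ k ∈ Finset.range (n + 1),
    pbinOn n Finset.univ p k * Real.logb 2 (pbinOn n Finset.univ p k)

lemma pbin_decomp (n : ℕ) (p : Fin n → ℝ) (l : Fin n) (x : ℝ) (k : ℤ) :
    pbinOn n Finset.univ (Function.update p l x) k =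
      x * pbinOn n (Finset.univ.erase l) p (k - 1) +
        (1 - x) * pbinOn n (Finset.univ.erase l) p k := by
  unfold pbinOn
  rw [Finset.mul_sum, Finset.mul_sum,
    ← Finset.sum_filter_add_sum_filter_not
      (Finset.univ.powerset.filter fun A : Finset (Fin n) => (A.card : ℤ) = k)
      (fun A => l ∈ A)]
  congr 1
  · refine Finset.sum_bij' (fun A _ => A.erase l) (fun B _ => insert l B) ?_ ?_ ?_ ?_ ?_
    · intro A hA
      simp only [Finset.mem_filter, Finset.mem_powerset] at hA ⊢
      obtain ⟨⟨-, hcard⟩, hl⟩ := hA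
      refine ⟨Finset.erase_subset_erase l (Finset.subset_univ A), ?_⟩
      rw [Finset.card_erase_of_mem hl]
      have h1 : 1 ≤ A.card := Finset.card_pos.mpr ⟨l, hl⟩
      push_cast [h1]
      omega
    · intro B hB
      simp only [Finset.mem_filter, Finset.mem_powerset] at hB ⊢
      obtain ⟨hsub, hcard⟩ := hB
      have hlB : l ∉ B := fun h => (Finset.mem_erase.mp (hsub h)).1 rfl
      refine ⟨⟨Finset.subset_univ _, ?_⟩, Finset.mem_insert_self _ _⟩
      rw [Finset.card_insert_of_notMem hlB]
      push_cast
      omega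
    · intro A hA
      simp only [Finset.mem_filter] at hA
      exact Finset.insert_erase hA.2
    · intro B hB
      simp only [Finset.mem_filter, Finset.mem_powerset] at hB
      have hlB : l ∉ B := fun h => (Finset.mem_erase.mp (hB.1 h)).1 rfl
      exact Finset.erase_insert hlB
    · intro A hA
      simp only [Finset.mem_filter] at hA
      have hl : l ∈ A := hA.2
      have h1 : ∏ i ∈ A, Function.update p l x i
          = x * ∏ i ∈ A.erase l, p i := by
        rw [← Finset.mul_prod_erase A _ hl, Function.update_self]
        congr 1
        exact Finset.prod_congr rfl fun i hi =>
          Function.update_of_ne (Finset.mem_erase.mp hi).1 _ _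
      have h2 : ∏ j ∈ Finset.univ \ A, (1 - Function.update p l x j)
          = ∏ j ∈ Finset.univ.erase l \ A.erase l, (1 - p j) := by
        have hset : Finset.univ \ A = Finset.univ.erase l \ A.erase l := by
          ext j
          simp only [Finset.mem_sdiff, Finset.mem_erase, Finset.mem_univ, true_and]
          have : j = l → j ∈ A := fun h => h ▸ hl
          tauto
        rw [hset]
        refine Finset.prod_congr rfl fun j hj => ?_
        rw [Function.update_of_ne]
        exact (Finset.mem_erase.mp (Finset.mem_sdiff.mp hj).1).1
      rw [h1, h2]; ring
  · have hset : (Finset.univ.powerset.filter fun A : Finset (Fin n) => (A.card : ℤ) = k).filter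
        (fun A => ¬ l ∈ A)
        = (Finset.univ.erase l).powerset.filter fun A : Finset (Fin n) => (A.card : ℤ) = k := by
      ext A
      simp only [Finset.mem_filter, Finset.mem_powerset, Finset.subset_erase,
        Finset.subset_univ, true_and]
      tauto
    rw [hset]
    refine Finset.sum_congr rfl fun A hA => ?_
    simp only [Finset.mem_filter, Finset.mem_powerset, Finset.subset_erase] at hA
    obtain ⟨⟨-, hlA⟩, -⟩ := hA
    have h1 : ∏ i ∈ A, Function.update p l x i = ∏ i ∈ A, p i :=
      Finset.prod_congr rfl fun i hi =>
        Function.update_of_ne (by rintro rfl; exact hlA hi) _ _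
    have h2 : ∏ j ∈ Finset.univ \ A, (1 - Function.update p l x j)
        = (1 - x) * ∏ j ∈ Finset.univ.erase l \ A, (1 - p j) := by
      have hl : l ∈ Finset.univ \ A := Finset.mem_sdiff.mpr ⟨Finset.mem_univ l, hlA⟩
      rw [← Finset.mul_prod_erase _ _ hl, Function.update_self]
      congr 1
      have hset2 : (Finset.univ \ A).erase l = Finset.univ.erase l \ A := by
        ext j
        simp only [Finset.mem_erase, Finset.mem_sdiff, Finset.mem_univ, true_and]
        tauto
      rw [hset2]
      refine Finset.prod_congr rfl fun j hj => ?_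
      rw [Function.update_of_ne (Finset.mem_erase.mp (Finset.mem_sdiff.mp hj).1).1]
    rw [h1, h2]; ring

lemma pbin_pos (n : ℕ) (p : Fin n → ℝ) (hp : ∀ i, 0 < p i ∧ p i < 1) (k : ℕ)
    (hk : k ≤ n) : 0 < pbinOn n Finset.univ p k := by
  obtain ⟨A, hA, hcard⟩ := Finset.exists_subset_card_eq
    (s := (Finset.univ : Finset (Fin n))) (n := k) (by simpa using hk)
  unfold pbinOn
  refine Finset.sum_pos' (fun B hB => ?_) ⟨A, ?_, ?_⟩
  · refine mul_nonneg (Finset.prod_nonneg fun i _ => (hp i).1.le)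
      (Finset.prod_nonneg fun j _ => by linarith [(hp j).2])
  · simp [Finset.mem_filter, hA, hcard]
  · have h1 : 0 < ∏ i ∈ A, p i := Finset.prod_pos fun i _ => (hp i).1
    have h2 : 0 < ∏ j ∈ Finset.univ \ A, (1 - p j) :=
      Finset.prod_pos fun j _ => by linarith [(hp j).2]
    positivity

lemma pbin_zero_of (n : ℕ) (S : Finset (Fin n)) (p : Fin n → ℝ) (k : ℤ)
    (h : ∀ A : Finset (Fin n), A ⊆ S → (A.card : ℤ) ≠ k) : pbinOn n S p k = 0 := by
  unfold pbinOn
  rw [Finset.filter_false_of_mem, Finset.sum_empty]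
  intro A hA
  exact h A (Finset.mem_powerset.mp hA)

/-- First partial derivative of the entropy:
`∂H(Z_p)/∂p_l = ∑_{k=0}^n (b(k, p_l̂) − b(k−1, p_l̂)) · log₂ b(k,p)`. -/
theorem hasDerivAt_pbinEnt (n : ℕ) (hn : 1 ≤ n) (p : Fin n → ℝ)
    (hp : ∀ i, 0 < p i ∧ p i < 1) (l : Fin n) :
    HasDerivAt (fun x : ℝ => pbinEnt n (Function.update p l x))
      (∑ k ∈ Finset.range (n + 1),
        (pbinOn n (Finset.univ.erase l) p k - pbinOn n (Finset.univ.erase l) p ((k : ℤ) - 1)) *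
          Real.logb 2 (pbinOn n Finset.univ p k))
      (p l) := by
  set c : ℤ → ℝ := fun k => pbinOn n (Finset.univ.erase l) p k with hc
  set b : ℤ → ℝ := fun k => pbinOn n Finset.univ p k with hb
  -- vanishing cases
  have hcneg : c (-1) = 0 := by
    refine pbin_zero_of _ _ _ _ fun A _ h => ?_
    omega
  have hcn : c n = 0 := by
    refine pbin_zero_of _ _ _ _ fun A hA h => ?_
    have hcard : A.card ≤ (Finset.univ.erase l).card := Finset.card_le_card hA
    rw [Finset.card_erase_of_mem (Finset.mem_univ l), Finset.card_univ,
      Fintype.card_fin] at hcard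
    omega
  have htel : ∑ k ∈ Finset.range (n + 1), (c k - c ((k : ℤ) - 1)) = 0 := by
    have h := Finset.sum_range_sub (f := fun i : ℕ => c ((i : ℤ) - 1)) (n + 1)
    have h2 : ∀ i : ℕ, c (((i : ℕ) + 1 : ℕ) - 1 : ℤ) = c i := by
      intro i; congr 1; push_cast; ring
    calc ∑ k ∈ Finset.range (n + 1), (c k - c ((k : ℤ) - 1))
        = ∑ k ∈ Finset.range (n + 1),
            (c (((k : ℕ) + 1 : ℕ) - 1 : ℤ) - c ((k : ℤ) - 1)) := by
          exact Finset.sum_congr rfl fun k _ => by rw [h2]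
      _ = c (((n + 1 : ℕ) : ℤ) - 1) - c (((0 : ℕ) : ℤ) - 1) := h
      _ = 0 := by
          have : (((n + 1 : ℕ) : ℤ) - 1) = (n : ℤ) := by push_cast; ring
          rw [this]
          norm_num [hcn, hcneg]
  have hderiv : ∀ k ∈ Finset.range (n + 1),
      HasDerivAt (fun x => pbinOn n Finset.univ (Function.update p l x) k *
          Real.logb 2 (pbinOn n Finset.univ (Function.update p l x) k))
        ((c ((k : ℤ) - 1) - c k) * (Real.log (b k) + 1) / Real.log 2) (p l) := by
    intro k hk
    have hF : HasDerivAt (fun x => pbinOn n Finset.univ (Function.update p l x) (k : ℤ))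
        (c ((k : ℤ) - 1) - c k) (p l) := by
      have heq : (fun x => pbinOn n Finset.univ (Function.update p l x) (k : ℤ))
          = fun x => x * c ((k : ℤ) - 1) + (1 - x) * c k := by
        funext x; exact pbin_decomp n p l x k
      rw [heq]
      have h1 := (hasDerivAt_id (p l)).mul_const (c ((k : ℤ) - 1))
      have h2 := ((hasDerivAt_const (p l) (1 : ℝ)).sub (hasDerivAt_id (p l))).mul_const (c k)
      have := h1.add h2
      exact this.congr_deriv (by ring)
    have hFpl : pbinOn n Finset.univ (Function.update p l (p l)) (k : ℤ) = b k := by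
      rw [Function.update_eq_self]
    have hbpos : 0 < b k := pbin_pos n p hp k (Nat.lt_succ_iff.mp (Finset.mem_range.mp hk))
    have hne : pbinOn n Finset.univ (Function.update p l (p l)) (k : ℤ) ≠ 0 := by
      rw [hFpl]; exact hbpos.ne'
    have hlog := (Real.hasDerivAt_mul_log hne).comp (p l) hF
    have hdiv := hlog.div_const (Real.log 2)
    have hfun : (fun x => pbinOn n Finset.univ (Function.update p l x) (k : ℤ) *
          Real.logb 2 (pbinOn n Finset.univ (Function.update p l x) (k : ℤ)))
        = fun x => ((fun y => y * Real.log y)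
            (pbinOn n Finset.univ (Function.update p l x) (k : ℤ))) / Real.log 2 := by
      funext x
      simp only [Real.logb]
      ring
    rw [hfun]
    refine hdiv.congr_deriv ?_
    rw [hFpl]
    ring
  have Hsum := (HasDerivAt.fun_sum hderiv).neg
  have hfun2 : (fun x : ℝ => pbinEnt n (Function.update p l x))
      = fun x : ℝ => -∑ k ∈ Finset.range (n + 1),
          pbinOn n Finset.univ (Function.update p l x) k *
            Real.logb 2 (pbinOn n Finset.univ (Function.update p l x) k) := by
    funext x; rfl
  rw [hfun2]
  refine Hsum.congr_deriv (Eq.symm ?_)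
  rw [← Finset.sum_neg_distrib]
  have hper : ∀ k ∈ Finset.range (n + 1),
      (c k - c ((k : ℤ) - 1)) * Real.logb 2 (b k)
        = -((c ((k : ℤ) - 1) - c k) * (Real.log (b k) + 1) / Real.log 2)
          - (c k - c ((k : ℤ) - 1)) * (1 / Real.log 2) := by
    intro k hk
    simp only [Real.logb]
    field_simp
    ring
  calc ∑ k ∈ Finset.range (n + 1), (c k - c ((k : ℤ) - 1)) * Real.logb 2 (b k)
      = ∑ k ∈ Finset.range (n + 1),
          (-((c ((k : ℤ) - 1) - c k) * (Real.log (b k) + 1) / Real.log 2)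
            - (c k - c ((k : ℤ) - 1)) * (1 / Real.log 2)) := Finset.sum_congr rfl hper
    _ = ∑ k ∈ Finset.range (n + 1),
          -((c ((k : ℤ) - 1) - c k) * (Real.log (b k) + 1) / Real.log 2)
        - (∑ k ∈ Finset.range (n + 1), (c k - c ((k : ℤ) - 1))) * (1 / Real.log 2) := by
        rw [Finset.sum_sub_distrib, Finset.sum_mul]
    _ = ∑ k ∈ Finset.range (n + 1),
          -((c ((k : ℤ) - 1) - c k) * (Real.log (b k) + 1) / Real.log 2) := by
        rw [htel]; ring
end

section
/- (Second directional derivative of the entropy) Let n ≥ 2, let p = (p_1,…,p_n) with 0 < p_i < 1 for all i, let l ≠ m in [n], and let D_u = ∂/∂p_l − ∂/∂p_m. Then D²_u H(Z_p) = 2·∑_{k=0}^n Δ²_k b(k, p_{l̂,m̂}) · log₂ b(k,p) − (1/ln 2)·∑_{k=0}^n (Δ_k b(k, p_l̂) − Δ_k b(k, p_m̂))² / b(k,p). -/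
open Finset

/-- The partial derivative with respect to the `l`-th coordinate. -/
noncomputable def pderiv (n : ℕ) (l : Fin n) (f : (Fin n → ℝ) → ℝ) (p : Fin n → ℝ) : ℝ :=
  deriv (fun x : ℝ => f (Function.update p l x)) (p l)

/-- The directional derivative operator `D_u = ∂/∂p_l − ∂/∂p_m`. -/
noncomputable def Du (n : ℕ) (l m : Fin n) (f : (Fin n → ℝ) → ℝ) (p : Fin n → ℝ) : ℝ :=
  pderiv n l f p - pderiv n m f p




lemma finset_erase_comm {α : Type*} [DecidableEq α] (s : Finset α) (a b : α) :
    (s.erase a).erase b = (s.erase b).erase a := by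
  ext x; simp only [mem_erase]; tauto


lemma pbinOn_update (n : ℕ) (S : Finset (Fin n)) (p : Fin n → ℝ) (l : Fin n)
    (hl : l ∉ S) (x : ℝ) (k : ℤ) :
    pbinOn n S (Function.update p l x) k = pbinOn n S p k := by
  unfold pbinOn
  refine Finset.sum_congr rfl fun A hA => ?_
  simp only [mem_filter, mem_powerset] at hA
  have h1 : ∀ i ∈ A, Function.update p l x i = p i := fun i hi =>
    Function.update_of_ne (fun h => hl (by rw [← h]; exact hA.1 hi)) _ _
  have h2 : ∀ j ∈ S \ A, (1 - Function.update p l x j) = 1 - p j := fun j hj => by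
    rw [Function.update_of_ne (fun h => hl (by rw [← h]; exact (mem_sdiff.mp hj).1)) _ _]
  rw [Finset.prod_congr rfl h1, Finset.prod_congr rfl h2]


lemma pbinOn_zero_of_neg (n : ℕ) (S : Finset (Fin n)) (p : Fin n → ℝ) (k : ℤ)
    (hk : k < 0) : pbinOn n S p k = 0 := by
  unfold pbinOn
  rw [Finset.filter_false_of_mem, Finset.sum_empty]
  intro A _ h
  omega


lemma pbinOn_zero_of_gt (n : ℕ) (S : Finset (Fin n)) (p : Fin n → ℝ) (k : ℤ)
    (hk : (S.card : ℤ) < k) : pbinOn n S p k = 0 := by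
  unfold pbinOn
  rw [Finset.filter_false_of_mem, Finset.sum_empty]
  intro A hA h
  have := Finset.card_le_card (Finset.mem_powerset.mp hA)
  omega


lemma pbinOn_pos (n : ℕ) (S : Finset (Fin n)) (p : Fin n → ℝ)
    (hp : ∀ i, 0 < p i ∧ p i < 1) (k : ℤ) (hk0 : 0 ≤ k) (hk1 : k ≤ S.card) :
    0 < pbinOn n S p k := by
  obtain ⟨A, hAS, hcard⟩ := Finset.exists_subset_card_eq (n := k.toNat) (s := S) (by omega)
  refine Finset.sum_pos' (fun B _ => mul_nonneg
    (Finset.prod_nonneg fun i _ => (hp i).1.le)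
    (Finset.prod_nonneg fun j _ => by linarith [(hp j).2])) ⟨A, ?_, ?_⟩
  · simp only [mem_filter, mem_powerset]
    exact ⟨hAS, by rw [hcard]; omega⟩
  · exact mul_pos (Finset.prod_pos fun i _ => (hp i).1)
      (Finset.prod_pos fun j _ => by linarith [(hp j).2])


lemma pbinOn_decomp (n : ℕ) (S : Finset (Fin n)) (p : Fin n → ℝ) (l : Fin n)
    (hl : l ∈ S) (k : ℤ) :
    pbinOn n S p k =
      p l * pbinOn n (S.erase l) p (k - 1) + (1 - p l) * pbinOn n (S.erase l) p k := by
  classical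
  set T := S.erase l with hT
  have hlT : l ∉ T := Finset.notMem_erase l S
  have hS : S = insert l T := (Finset.insert_erase hl).symm
  unfold pbinOn
  rw [Finset.sum_filter, Finset.sum_filter, Finset.sum_filter]
  rw [hS, Finset.sum_powerset_insert hlT]
  have h1 : ∀ A ∈ T.powerset,
      (if (A.card : ℤ) = k then (∏ i ∈ A, p i) * ∏ j ∈ insert l T \ A, (1 - p j) else 0)
      = (1 - p l) * (if (A.card : ℤ) = k then (∏ i ∈ A, p i) * ∏ j ∈ T \ A, (1 - p j) else 0) := by
    intro A hA
    have hAT := Finset.mem_powerset.mp hA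
    have hlA : l ∉ A := fun h => hlT (hAT h)
    rw [Finset.insert_sdiff_of_notMem _ hlA,
      Finset.prod_insert (fun h => hlT (mem_sdiff.mp h).1)]
    split <;> ring
  have h2 : ∀ A ∈ T.powerset,
      (if ((insert l A).card : ℤ) = k then
        (∏ i ∈ insert l A, p i) * ∏ j ∈ insert l T \ insert l A, (1 - p j) else 0)
      = p l * (if (A.card : ℤ) = k - 1 then (∏ i ∈ A, p i) * ∏ j ∈ T \ A, (1 - p j) else 0) := by
    intro A hA
    have hAT := Finset.mem_powerset.mp hA
    have hlA : l ∉ A := fun h => hlT (hAT h)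
    rw [Finset.insert_sdiff_insert, Finset.sdiff_insert,
      Finset.erase_eq_of_notMem (fun h => hlT (mem_sdiff.mp h).1),
      Finset.prod_insert hlA, Finset.card_insert_of_notMem hlA]
    have hiff : ((A.card + 1 : ℕ) : ℤ) = k ↔ (A.card : ℤ) = k - 1 := by push_cast; omega
    by_cases hc : (A.card : ℤ) = k - 1
    · rw [if_pos (hiff.mpr hc), if_pos hc]; ring
    · rw [if_neg (fun h => hc (hiff.mp h)), if_neg hc]; ring
  rw [Finset.sum_congr rfl h1, Finset.sum_congr rfl h2, ← Finset.mul_sum, ← Finset.mul_sum]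
  ring


lemma pbinOn_telescope (n : ℕ) (S : Finset (Fin n)) (p : Fin n → ℝ)
    (hS : S.card < n) :
    ∑ k ∈ Finset.range (n + 1),
      (pbinOn n S p ((k : ℤ) - 1) - pbinOn n S p k) = 0 := by
  have h := Finset.sum_range_sub' (f := fun i : ℕ => pbinOn n S p ((i : ℤ) - 1)) (n + 1)
  have he : ∀ k ∈ Finset.range (n + 1),
      (pbinOn n S p ((k : ℤ) - 1) - pbinOn n S p k)
      = (fun i : ℕ => pbinOn n S p ((i : ℤ) - 1)) k
        - (fun i : ℕ => pbinOn n S p ((i : ℤ) - 1)) (k + 1) := by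
    intro k _
    simp only
    congr 2
    push_cast; ring
  rw [Finset.sum_congr rfl he, h]
  rw [pbinOn_zero_of_neg n S p _ (by norm_num),
    pbinOn_zero_of_gt n S p _ (by push_cast; omega)]
  ring


lemma hasDerivAt_aff_mul_logb (α β γ δ x : ℝ) (h : 0 < γ + x * δ) :
    HasDerivAt (fun y => (α + y * β) * Real.logb 2 (γ + y * δ))
      (β * Real.logb 2 (γ + x * δ) + (α + x * β) * (δ / ((γ + x * δ) * Real.log 2))) x := by
  have h1 : HasDerivAt (fun y : ℝ => γ + y * δ) δ x := by
    simpa using ((hasDerivAt_id x).mul_const δ).const_add γ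
  have h2 : HasDerivAt (fun y : ℝ => α + y * β) β x := by
    simpa using ((hasDerivAt_id x).mul_const β).const_add α
  have h3 : HasDerivAt (fun y : ℝ => Real.log (γ + y * δ)) ((γ + x * δ)⁻¹ * δ) x :=
    by have := (Real.hasDerivAt_log (ne_of_gt h)).comp x h1; exact this
  have h4 := (h2.mul h3).div_const (Real.log 2)
  have hlog2 : Real.log 2 ≠ 0 := Real.log_ne_zero_of_pos_of_ne_one (by norm_num) (by norm_num)
  convert h4 using 1
  · rfl
  · rfl
  · funext y
    rw [Real.logb, div_eq_mul_inv, div_eq_mul_inv, Pi.mul_apply]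
    ring
  · rw [Real.logb]
    field_simp




lemma log2_ne : Real.log 2 ≠ 0 :=
  Real.log_ne_zero_of_pos_of_ne_one (by norm_num) (by norm_num)


lemma pderiv_pbinEnt (n : ℕ) (l : Fin n) (q : Fin n → ℝ) (hq : ∀ i, 0 < q i ∧ q i < 1) :
    pderiv n l (pbinEnt n) q =
      -∑ k ∈ Finset.range (n + 1),
        (pbinOn n (Finset.univ.erase l) q ((k : ℤ) - 1) -
          pbinOn n (Finset.univ.erase l) q (k : ℤ)) *
          (Real.logb 2 (pbinOn n Finset.univ q (k : ℤ)) + 1 / Real.log 2) := by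
  set A : ℤ → ℝ := fun j => pbinOn n (Finset.univ.erase l) q j with hA
  have hcard : ((Finset.univ : Finset (Fin n)).card : ℤ) = n := by
    rw [Finset.card_univ, Fintype.card_fin]
  have hfun : (fun x => pbinEnt n (Function.update q l x)) =
      fun x => -∑ k ∈ Finset.range (n + 1),
        (A (k : ℤ) + x * (A ((k : ℤ) - 1) - A (k : ℤ))) *
          Real.logb 2 (A (k : ℤ) + x * (A ((k : ℤ) - 1) - A (k : ℤ))) := by
    funext x
    unfold pbinEnt
    congr 1
    refine Finset.sum_congr rfl fun k _ => ?_
    have hd := pbinOn_decomp n Finset.univ (Function.update q l x) l (Finset.mem_univ l) (k : ℤ)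
    simp only [pbinOn_update n (Finset.univ.erase l) q l (Finset.notMem_erase l Finset.univ) x,
      Function.update_self] at hd
    have harg : x * pbinOn n (Finset.univ.erase l) q ((k : ℤ) - 1) +
        (1 - x) * pbinOn n (Finset.univ.erase l) q (k : ℤ)
        = A (k : ℤ) + x * (A ((k : ℤ) - 1) - A (k : ℤ)) := by
      simp only [hA]; ring
    rw [hd, harg]
  have hb : ∀ k ∈ Finset.range (n + 1),
      0 < A (k : ℤ) + q l * (A ((k : ℤ) - 1) - A (k : ℤ)) := by
    intro k hk
    have harg : A (k : ℤ) + q l * (A ((k : ℤ) - 1) - A (k : ℤ)) = pbinOn n Finset.univ q k := by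
      rw [pbinOn_decomp n Finset.univ q l (Finset.mem_univ l) (k : ℤ)]; simp only [hA]; ring
    rw [harg]
    exact pbinOn_pos n _ q hq _ (by positivity)
      (by rw [hcard]; have hh := Finset.mem_range.mp hk; omega)
  have hd : HasDerivAt (fun x => -∑ k ∈ Finset.range (n + 1),
      (A (k : ℤ) + x * (A ((k : ℤ) - 1) - A (k : ℤ))) *
        Real.logb 2 (A (k : ℤ) + x * (A ((k : ℤ) - 1) - A (k : ℤ))))
      (-∑ k ∈ Finset.range (n + 1),
        ((A ((k : ℤ) - 1) - A (k : ℤ)) *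
            Real.logb 2 (A (k : ℤ) + q l * (A ((k : ℤ) - 1) - A (k : ℤ))) +
          (A (k : ℤ) + q l * (A ((k : ℤ) - 1) - A (k : ℤ))) *
            ((A ((k : ℤ) - 1) - A (k : ℤ)) /
              ((A (k : ℤ) + q l * (A ((k : ℤ) - 1) - A (k : ℤ))) * Real.log 2)))) (q l) :=
    (HasDerivAt.fun_sum fun (k : ℕ) (hk : k ∈ Finset.range (n + 1)) =>
      hasDerivAt_aff_mul_logb (A (k : ℤ)) (A ((k : ℤ) - 1) - A (k : ℤ))
        (A (k : ℤ)) (A ((k : ℤ) - 1) - A (k : ℤ)) (q l) (hb k hk)).neg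
  rw [pderiv, hfun, hd.deriv]
  congr 1
  refine Finset.sum_congr rfl fun k hk => ?_
  have harg : A (k : ℤ) + q l * (A ((k : ℤ) - 1) - A (k : ℤ)) = pbinOn n Finset.univ q k := by
    rw [pbinOn_decomp n Finset.univ q l (Finset.mem_univ l) (k : ℤ)]; simp only [hA]; ring
  have hbpos := hb k hk
  rw [harg] at hbpos ⊢
  simp only [hA]
  field_simp


noncomputable def Gfun (n : ℕ) (l m : Fin n) (q : Fin n → ℝ) : ℝ :=
  -∑ k ∈ Finset.range (n + 1),
    ((pbinOn n (Finset.univ.erase l) q ((k : ℤ) - 1) - pbinOn n (Finset.univ.erase l) q (k : ℤ)) -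
      (pbinOn n (Finset.univ.erase m) q ((k : ℤ) - 1) - pbinOn n (Finset.univ.erase m) q (k : ℤ))) *
      Real.logb 2 (pbinOn n Finset.univ q (k : ℤ))


lemma card_erase_univ (n : ℕ) (l : Fin n) : ((Finset.univ : Finset (Fin n)).erase l).card < n := by
  rw [Finset.card_erase_of_mem (Finset.mem_univ l), Finset.card_univ, Fintype.card_fin]
  have : 0 < n := l.pos
  omega


lemma du_ent_eq (n : ℕ) (l m : Fin n) (q : Fin n → ℝ) (hq : ∀ i, 0 < q i ∧ q i < 1) :
    Du n l m (pbinEnt n) q = Gfun n l m q := by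
  rw [Du, pderiv_pbinEnt n l q hq, pderiv_pbinEnt n m q hq, Gfun]
  have tl := pbinOn_telescope n (Finset.univ.erase l) q (card_erase_univ n l)
  have tm := pbinOn_telescope n (Finset.univ.erase m) q (card_erase_univ n m)
  have expand : ∀ S : Finset (Fin n),
      ∑ k ∈ Finset.range (n + 1),
        (pbinOn n S q ((k : ℤ) - 1) - pbinOn n S q (k : ℤ)) *
          (Real.logb 2 (pbinOn n Finset.univ q (k : ℤ)) + 1 / Real.log 2)
      = ∑ k ∈ Finset.range (n + 1),
          (pbinOn n S q ((k : ℤ) - 1) - pbinOn n S q (k : ℤ)) *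
            Real.logb 2 (pbinOn n Finset.univ q (k : ℤ))
        + (∑ k ∈ Finset.range (n + 1),
            (pbinOn n S q ((k : ℤ) - 1) - pbinOn n S q (k : ℤ))) * (1 / Real.log 2) := by
    intro S
    rw [Finset.sum_mul, ← Finset.sum_add_distrib]
    exact Finset.sum_congr rfl fun k _ => by ring
  rw [expand, expand, tl, tm]
  rw [show (-(∑ k ∈ Finset.range (n + 1),
        (pbinOn n (Finset.univ.erase l) q ((k : ℤ) - 1) - pbinOn n (Finset.univ.erase l) q (k : ℤ)) *
          Real.logb 2 (pbinOn n Finset.univ q (k : ℤ)) + 0 * (1 / Real.log 2)) -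
      -(∑ k ∈ Finset.range (n + 1),
        (pbinOn n (Finset.univ.erase m) q ((k : ℤ) - 1) - pbinOn n (Finset.univ.erase m) q (k : ℤ)) *
          Real.logb 2 (pbinOn n Finset.univ q (k : ℤ)) + 0 * (1 / Real.log 2)))
    = -(∑ k ∈ Finset.range (n + 1),
        (pbinOn n (Finset.univ.erase l) q ((k : ℤ) - 1) - pbinOn n (Finset.univ.erase l) q (k : ℤ)) *
          Real.logb 2 (pbinOn n Finset.univ q (k : ℤ))
      - ∑ k ∈ Finset.range (n + 1),
        (pbinOn n (Finset.univ.erase m) q ((k : ℤ) - 1) - pbinOn n (Finset.univ.erase m) q (k : ℤ)) *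
          Real.logb 2 (pbinOn n Finset.univ q (k : ℤ))) from by ring]
  rw [← Finset.sum_sub_distrib]
  congr 1
  exact Finset.sum_congr rfl fun k _ => by ring




lemma pderiv_G_l (n : ℕ) (l m : Fin n) (hlm : l ≠ m) (p : Fin n → ℝ)
    (hp : ∀ i, 0 < p i ∧ p i < 1) :
    pderiv n l (Gfun n l m) p =
      ∑ k ∈ Finset.range (n + 1),
        ((pbinOn n ((Finset.univ.erase l).erase m) p (k : ℤ) -
            2 * pbinOn n ((Finset.univ.erase l).erase m) p ((k : ℤ) - 1) +
            pbinOn n ((Finset.univ.erase l).erase m) p ((k : ℤ) - 2)) *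
            Real.logb 2 (pbinOn n Finset.univ p (k : ℤ)) -
          ((pbinOn n (Finset.univ.erase l) p ((k : ℤ) - 1) - pbinOn n (Finset.univ.erase l) p (k : ℤ)) -
            (pbinOn n (Finset.univ.erase m) p ((k : ℤ) - 1) - pbinOn n (Finset.univ.erase m) p (k : ℤ))) *
            ((pbinOn n (Finset.univ.erase l) p ((k : ℤ) - 1) - pbinOn n (Finset.univ.erase l) p (k : ℤ)) /
              (pbinOn n Finset.univ p (k : ℤ) * Real.log 2))) := by
  classical
  have hlem : l ∈ Finset.univ.erase m := Finset.mem_erase.mpr ⟨hlm, Finset.mem_univ l⟩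
  have hEeq : (Finset.univ.erase m).erase l = (Finset.univ.erase l).erase m :=
    finset_erase_comm _ _ _
  set d : ℤ → ℝ := fun j => pbinOn n ((Finset.univ.erase l).erase m) p j with hd
  set A : ℤ → ℝ := fun j => pbinOn n (Finset.univ.erase l) p j with hA
  set Bb : ℤ → ℝ := fun j => pbinOn n Finset.univ p j with hBb
  -- affine coefficients
  set al : ℤ → ℝ := fun k => (A (k - 1) - A k) - (d (k - 1) - d k) with hal
  set be : ℤ → ℝ := fun k => -(d (k - 2) - 2 * d (k - 1) + d k) with hbe
  have hfun : (fun x => Gfun n l m (Function.update p l x)) =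
      fun x => -∑ k ∈ Finset.range (n + 1),
        (al (k : ℤ) + x * be (k : ℤ)) *
          Real.logb 2 (A (k : ℤ) + x * (A ((k : ℤ) - 1) - A (k : ℤ))) := by
    funext x
    unfold Gfun
    congr 1
    refine Finset.sum_congr rfl fun k _ => ?_
    set q := Function.update p l x with hq
    have e1 : ∀ j : ℤ, pbinOn n (Finset.univ.erase l) q j = A j := fun j =>
      pbinOn_update n _ p l (Finset.notMem_erase l _) x j
    have e2 : ∀ j : ℤ, pbinOn n (Finset.univ.erase m) q j = x * d (j - 1) + (1 - x) * d j := by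
      intro j
      rw [pbinOn_decomp n _ q l hlem j]
      rw [hq, Function.update_self]
      rw [show ((Finset.univ.erase m).erase l) = ((Finset.univ.erase l).erase m) from hEeq]
      rw [pbinOn_update n _ p l (fun h => (Finset.mem_erase.mp (Finset.mem_erase.mp h).2).1 rfl) x,
        pbinOn_update n _ p l (fun h => (Finset.mem_erase.mp (Finset.mem_erase.mp h).2).1 rfl) x]
    have e3 : pbinOn n Finset.univ q (k : ℤ) =
        A (k : ℤ) + x * (A ((k : ℤ) - 1) - A (k : ℤ)) := by
      rw [pbinOn_decomp n _ q l (Finset.mem_univ l), hq, Function.update_self]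
      rw [show (Function.update p l x) = q from rfl]
      rw [e1, e1]; ring
    rw [e1, e1, e2, e2, e3]
    rw [show ((k : ℤ) - 1 - 1) = (k : ℤ) - 2 by ring]
    congr 1
    simp only [hal, hbe]
    ring
  have hbpos : ∀ k ∈ Finset.range (n + 1),
      0 < A (k : ℤ) + p l * (A ((k : ℤ) - 1) - A (k : ℤ)) := by
    intro k hk
    have harg : A (k : ℤ) + p l * (A ((k : ℤ) - 1) - A (k : ℤ)) = pbinOn n Finset.univ p k := by
      rw [pbinOn_decomp n Finset.univ p l (Finset.mem_univ l) (k : ℤ)]; simp only [hA]; ring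
    rw [harg]
    refine pbinOn_pos n _ p hp _ (by positivity) ?_
    rw [Finset.card_univ, Fintype.card_fin]
    have := Finset.mem_range.mp hk; omega
  have hderiv : HasDerivAt (fun x => -∑ k ∈ Finset.range (n + 1),
      (al (k : ℤ) + x * be (k : ℤ)) *
        Real.logb 2 (A (k : ℤ) + x * (A ((k : ℤ) - 1) - A (k : ℤ))))
      (-∑ k ∈ Finset.range (n + 1),
        (be (k : ℤ) * Real.logb 2 (A (k : ℤ) + p l * (A ((k : ℤ) - 1) - A (k : ℤ))) +
          (al (k : ℤ) + p l * be (k : ℤ)) *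
            ((A ((k : ℤ) - 1) - A (k : ℤ)) /
              ((A (k : ℤ) + p l * (A ((k : ℤ) - 1) - A (k : ℤ))) * Real.log 2)))) (p l) :=
    (HasDerivAt.fun_sum fun (k : ℕ) (hk : k ∈ Finset.range (n + 1)) =>
      hasDerivAt_aff_mul_logb (al (k : ℤ)) (be (k : ℤ)) (A (k : ℤ))
        (A ((k : ℤ) - 1) - A (k : ℤ)) (p l) (hbpos k hk)).neg
  rw [pderiv, hfun, hderiv.deriv, ← Finset.sum_neg_distrib]
  refine Finset.sum_congr rfl fun k hk => ?_
  have harg : A (k : ℤ) + p l * (A ((k : ℤ) - 1) - A (k : ℤ)) = Bb (k : ℤ) := by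
    rw [hBb]; simp only
    rw [pbinOn_decomp n Finset.univ p l (Finset.mem_univ l) (k : ℤ)]; simp only [hA]; ring
  have hBdec : pbinOn n (Finset.univ.erase m) p ((k : ℤ) - 1) -
      pbinOn n (Finset.univ.erase m) p (k : ℤ)
      = (d ((k : ℤ) - 1) - d (k : ℤ)) + p l * (d ((k : ℤ) - 2) - 2 * d ((k : ℤ) - 1) + d (k : ℤ)) := by
    rw [pbinOn_decomp n _ p l hlem ((k : ℤ) - 1), pbinOn_decomp n _ p l hlem (k : ℤ), hEeq]
    rw [show ((k : ℤ) - 1 - 1) = (k : ℤ) - 2 by ring]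
    simp only [hd]; ring
  rw [harg]
  rw [hBdec]
  simp only [hal, hbe, hA, hd, hBb]
  have hbpos' := hbpos k hk
  rw [harg] at hbpos'
  simp only [hBb] at hbpos'
  field_simp
  ring


lemma pderiv_G_m (n : ℕ) (l m : Fin n) (hlm : l ≠ m) (p : Fin n → ℝ)
    (hp : ∀ i, 0 < p i ∧ p i < 1) :
    pderiv n m (Gfun n l m) p =
      ∑ k ∈ Finset.range (n + 1),
        (-((pbinOn n ((Finset.univ.erase l).erase m) p (k : ℤ) -
            2 * pbinOn n ((Finset.univ.erase l).erase m) p ((k : ℤ) - 1) +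
            pbinOn n ((Finset.univ.erase l).erase m) p ((k : ℤ) - 2)) *
            Real.logb 2 (pbinOn n Finset.univ p (k : ℤ))) -
          ((pbinOn n (Finset.univ.erase l) p ((k : ℤ) - 1) - pbinOn n (Finset.univ.erase l) p (k : ℤ)) -
            (pbinOn n (Finset.univ.erase m) p ((k : ℤ) - 1) - pbinOn n (Finset.univ.erase m) p (k : ℤ))) *
            ((pbinOn n (Finset.univ.erase m) p ((k : ℤ) - 1) - pbinOn n (Finset.univ.erase m) p (k : ℤ)) /
              (pbinOn n Finset.univ p (k : ℤ) * Real.log 2))) := by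
  classical
  have hmel : m ∈ Finset.univ.erase l := Finset.mem_erase.mpr ⟨(Ne.symm hlm), Finset.mem_univ m⟩
  set d : ℤ → ℝ := fun j => pbinOn n ((Finset.univ.erase l).erase m) p j with hd
  set B : ℤ → ℝ := fun j => pbinOn n (Finset.univ.erase m) p j with hB
  set Bb : ℤ → ℝ := fun j => pbinOn n Finset.univ p j with hBb
  set al : ℤ → ℝ := fun k => (d (k - 1) - d k) - (B (k - 1) - B k) with hal
  set be : ℤ → ℝ := fun k => d (k - 2) - 2 * d (k - 1) + d k with hbe
  have hfun : (fun x => Gfun n l m (Function.update p m x)) =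
      fun x => -∑ k ∈ Finset.range (n + 1),
        (al (k : ℤ) + x * be (k : ℤ)) *
          Real.logb 2 (B (k : ℤ) + x * (B ((k : ℤ) - 1) - B (k : ℤ))) := by
    funext x
    unfold Gfun
    congr 1
    refine Finset.sum_congr rfl fun k _ => ?_
    set q := Function.update p m x with hq
    have e1 : ∀ j : ℤ, pbinOn n (Finset.univ.erase m) q j = B j := fun j =>
      pbinOn_update n _ p m (Finset.notMem_erase m _) x j
    have e2 : ∀ j : ℤ, pbinOn n (Finset.univ.erase l) q j = x * d (j - 1) + (1 - x) * d j := by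
      intro j
      rw [pbinOn_decomp n _ q m hmel j]
      rw [hq, Function.update_self]
      rw [pbinOn_update n _ p m (fun h => (Finset.mem_erase.mp h).1 rfl) x,
        pbinOn_update n _ p m (fun h => (Finset.mem_erase.mp h).1 rfl) x]
    have e3 : pbinOn n Finset.univ q (k : ℤ) =
        B (k : ℤ) + x * (B ((k : ℤ) - 1) - B (k : ℤ)) := by
      rw [pbinOn_decomp n _ q m (Finset.mem_univ m), hq, Function.update_self]
      rw [e1, e1]; ring
    rw [e1, e1, e2, e2, e3]
    rw [show ((k : ℤ) - 1 - 1) = (k : ℤ) - 2 by ring]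
    congr 1
    simp only [hal, hbe]
    ring
  have hbpos : ∀ k ∈ Finset.range (n + 1),
      0 < B (k : ℤ) + p m * (B ((k : ℤ) - 1) - B (k : ℤ)) := by
    intro k hk
    have harg : B (k : ℤ) + p m * (B ((k : ℤ) - 1) - B (k : ℤ)) = pbinOn n Finset.univ p k := by
      rw [pbinOn_decomp n Finset.univ p m (Finset.mem_univ m) (k : ℤ)]; simp only [hB]; ring
    rw [harg]
    refine pbinOn_pos n _ p hp _ (by positivity) ?_
    rw [Finset.card_univ, Fintype.card_fin]
    have := Finset.mem_range.mp hk; omega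
  have hderiv : HasDerivAt (fun x => -∑ k ∈ Finset.range (n + 1),
      (al (k : ℤ) + x * be (k : ℤ)) *
        Real.logb 2 (B (k : ℤ) + x * (B ((k : ℤ) - 1) - B (k : ℤ))))
      (-∑ k ∈ Finset.range (n + 1),
        (be (k : ℤ) * Real.logb 2 (B (k : ℤ) + p m * (B ((k : ℤ) - 1) - B (k : ℤ))) +
          (al (k : ℤ) + p m * be (k : ℤ)) *
            ((B ((k : ℤ) - 1) - B (k : ℤ)) /
              ((B (k : ℤ) + p m * (B ((k : ℤ) - 1) - B (k : ℤ))) * Real.log 2)))) (p m) :=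
    (HasDerivAt.fun_sum fun (k : ℕ) (hk : k ∈ Finset.range (n + 1)) =>
      hasDerivAt_aff_mul_logb (al (k : ℤ)) (be (k : ℤ)) (B (k : ℤ))
        (B ((k : ℤ) - 1) - B (k : ℤ)) (p m) (hbpos k hk)).neg
  rw [pderiv, hfun, hderiv.deriv, ← Finset.sum_neg_distrib]
  refine Finset.sum_congr rfl fun k hk => ?_
  have harg : B (k : ℤ) + p m * (B ((k : ℤ) - 1) - B (k : ℤ)) = Bb (k : ℤ) := by
    rw [hBb]; simp only
    rw [pbinOn_decomp n Finset.univ p m (Finset.mem_univ m) (k : ℤ)]; simp only [hB]; ring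
  have hAdec : pbinOn n (Finset.univ.erase l) p ((k : ℤ) - 1) -
      pbinOn n (Finset.univ.erase l) p (k : ℤ)
      = (d ((k : ℤ) - 1) - d (k : ℤ)) + p m * (d ((k : ℤ) - 2) - 2 * d ((k : ℤ) - 1) + d (k : ℤ)) := by
    rw [pbinOn_decomp n _ p m hmel ((k : ℤ) - 1), pbinOn_decomp n _ p m hmel (k : ℤ)]
    rw [show ((k : ℤ) - 1 - 1) = (k : ℤ) - 2 by ring]
    simp only [hd]; ring
  rw [harg, hAdec]
  simp only [hal, hbe, hB, hd, hBb]
  have hbpos' := hbpos k hk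
  rw [harg] at hbpos'
  simp only [hBb] at hbpos'
  field_simp
  ring


/-- Second directional derivative of the entropy along `u = e_l − e_m`:
`D²_u H(Z_p) = 2·∑ Δ²_k b(k, p_{l̂,m̂})·log₂ b(k,p)
  − (1/ln 2)·∑ (Δ_k b(k,p_l̂) − Δ_k b(k,p_m̂))² / b(k,p)`. -/
theorem second_directional_deriv_entropy (n : ℕ) (hn : 2 ≤ n) (p : Fin n → ℝ)
    (hp : ∀ i, 0 < p i ∧ p i < 1) (l m : Fin n) (hlm : l ≠ m) :
    Du n l m (fun q => Du n l m (fun r => pbinEnt n r) q) p =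
      2 * ∑ k ∈ Finset.range (n + 1),
          (pbinOn n ((Finset.univ.erase l).erase m) p k -
            2 * pbinOn n ((Finset.univ.erase l).erase m) p ((k : ℤ) - 1) +
            pbinOn n ((Finset.univ.erase l).erase m) p ((k : ℤ) - 2)) *
          Real.logb 2 (pbinOn n Finset.univ p k) -
        (1 / Real.log 2) * ∑ k ∈ Finset.range (n + 1),
          ((pbinOn n (Finset.univ.erase l) p k - pbinOn n (Finset.univ.erase l) p ((k : ℤ) - 1)) -
            (pbinOn n (Finset.univ.erase m) p k - pbinOn n (Finset.univ.erase m) p ((k : ℤ) - 1))) ^ 2 /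
            pbinOn n Finset.univ p k := by
  have key : ∀ j : Fin n,
      pderiv n j (fun q => Du n l m (fun r => pbinEnt n r) q) p = pderiv n j (Gfun n l m) p := by
    intro j
    unfold pderiv
    apply Filter.EventuallyEq.deriv_eq
    have hmem : Set.Ioo (0 : ℝ) 1 ∈ nhds (p j) := Ioo_mem_nhds (hp j).1 (hp j).2
    filter_upwards [hmem] with x hx
    refine du_ent_eq n l m _ (fun i => ?_)
    rcases eq_or_ne i j with rfl | hne
    · simpa [Function.update_self] using And.intro hx.1 hx.2
    · rw [Function.update_of_ne hne]; exact hp i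
  have hDu : Du n l m (fun q => Du n l m (fun r => pbinEnt n r) q) p
      = pderiv n l (Gfun n l m) p - pderiv n m (Gfun n l m) p := by
    rw [Du, key l, key m]
  rw [hDu, pderiv_G_l n l m hlm p hp, pderiv_G_m n l m hlm p hp,
    ← Finset.sum_sub_distrib, Finset.mul_sum, Finset.mul_sum, ← Finset.sum_sub_distrib]
  refine Finset.sum_congr rfl fun k hk => ?_
  have hb : 0 < pbinOn n Finset.univ p (k : ℤ) := by
    refine pbinOn_pos n _ p hp _ (by positivity) ?_
    rw [Finset.card_univ, Fintype.card_fin]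
    have := Finset.mem_range.mp hk; omega
  field_simp
  ring
end
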